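/- Let F be a field and C the split Cayley algebra over F, with bilinear form ⟨c, d⟩ = N(c+d) − N(c) − N(d), and set x₀ = (E₂₁ | 0), w₀ = (0 | E₁₁), x₀' = (−E₁₂ | 0), w₀' = (0 | E₂₂), where for a, b ∈ C the map L_{a,b} : C → C is L_{a,b}(c) = ⟨c, a⟩·b − ⟨c, b⟩·a. Then for every t ∈ F: (i) the explicit maps u_β(t) and u_{−β}(t) satisfy u_β(t)(c) = c + t·L_{w₀,x₀}(c) and u_{−β}(t)(c) = c + t·L_{w₀',x₀'}(c) for all c ∈ C; (ii) u_β(t) and u_{−β}(t) are F-algebra automorphisms of C; and (iii) u_β(s) ∘ u_β(t) = u_β(s+t) and u_{−β}(s) ∘ u_{−β}(t) = u_{−β}(s+t) for all s, t ∈ F. -/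

import Mathlib

set_option maxHeartbeats 2000000

open Matrix

/-- The underlying space of the split Cayley algebra over `F`: pairs `(x | y)` of 2×2
matrices. -/
abbrev Cayley (F : Type*) [Field F] := Matrix (Fin 2) (Fin 2) F × Matrix (Fin 2) (Fin 2) F

variable {F : Type*} [Field F]

/-- Multiplication of the split Cayley algebra. -/
def cmul (a b : Cayley F) : Cayley F :=
  (a.1 * b.1 + (b.2).adjugate * a.2, b.2 * a.1 + a.2 * (b.1).adjugate)

/-- The norm `N (x | y) = det x - det y` of the split Cayley algebra. -/
def cnorm (a : Cayley F) : F := (a.1).det - (a.2).det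

/-- The bilinear form `⟨c, d⟩ = N(c+d) - N c - N d` on the split Cayley algebra. -/
def bform (c d : Cayley F) : F := cnorm (c + d) - cnorm c - cnorm d

/-- `L_{a,b}(c) = ⟨c,a⟩·b - ⟨c,b⟩·a`. -/
def Lab (a b c : Cayley F) : Cayley F := bform c a • b - bform c b • a

/-- The root map `u_β(t)`: it sends `(x | y)` to the pair with `x₃ ↦ x₃ − t·y₄` and
`y₁ ↦ y₁ + t·x₂`, all other entries unchanged. -/
def uB (t : F) (z : Cayley F) : Cayley F :=
  (!![z.1 0 0, z.1 0 1; z.1 1 0 - t * z.2 1 1, z.1 1 1],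
   !![z.2 0 0 + t * z.1 0 1, z.2 0 1; z.2 1 0, z.2 1 1])

/-- The root map `u_{−β}(t)`: it sends `(x | y)` to the pair with `x₂ ↦ x₂ + t·y₁` and
`y₄ ↦ y₄ − t·x₃`, all other entries unchanged. -/
def uMB (t : F) (z : Cayley F) : Cayley F :=
  (!![z.1 0 0, z.1 0 1 + t * z.2 0 0; z.1 1 0, z.1 1 1],
   !![z.2 0 0, z.2 0 1; z.2 1 0, z.2 1 1 - t * z.1 1 0])

lemma sb (a b : Fin 2) :
    (single a b (1:F)) =
      !![if a = 0 ∧ b = 0 then 1 else 0, if a = 0 ∧ b = 1 then 1 else 0;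
         if a = 1 ∧ b = 0 then 1 else 0, if a = 1 ∧ b = 1 then 1 else 0] := by
  ext i j
  fin_cases i <;> fin_cases j <;> fin_cases a <;> fin_cases b <;> simp [Matrix.single]

lemma uB_Lab (t : F) (c : Cayley F) :
      uB t c = c + t • Lab ((0, single 0 0 1) : Cayley F)
        ((single 1 0 1, 0) : Cayley F) c := by
  obtain ⟨x, y⟩ := c
  rw [Matrix.eta_fin_two x, Matrix.eta_fin_two y, sb, sb]
  refine Prod.ext (Matrix.ext fun i j => ?_) (Matrix.ext fun i j => ?_) <;>
    fin_cases i <;> fin_cases j <;>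
    simp [uB, Lab, bform, cnorm, Matrix.det_fin_two, Matrix.add_apply, Matrix.sub_apply,
      Matrix.smul_apply] <;> first | ring1 | exact Or.inl (by ring)

lemma uMB_Lab (t : F) (c : Cayley F) :
      uMB t c = c + t • Lab ((0, single 1 1 1) : Cayley F)
        ((-(single 0 1 1), 0) : Cayley F) c := by
  obtain ⟨x, y⟩ := c
  rw [Matrix.eta_fin_two x, Matrix.eta_fin_two y, sb, sb]
  refine Prod.ext (Matrix.ext fun i j => ?_) (Matrix.ext fun i j => ?_) <;>
    fin_cases i <;> fin_cases j <;>
    simp [uMB, Lab, bform, cnorm, Matrix.det_fin_two, Matrix.add_apply, Matrix.sub_apply,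
      Matrix.smul_apply, Matrix.neg_apply] <;> first | ring1 | exact Or.inl (by ring)

lemma uB_add (t : F) (a b : Cayley F) : uB t (a + b) = uB t a + uB t b := by
  refine Prod.ext (Matrix.ext fun i j => ?_) (Matrix.ext fun i j => ?_) <;>
    fin_cases i <;> fin_cases j <;>
    simp [uB, Matrix.add_apply] <;> ring

lemma uMB_add (t : F) (a b : Cayley F) : uMB t (a + b) = uMB t a + uMB t b := by
  refine Prod.ext (Matrix.ext fun i j => ?_) (Matrix.ext fun i j => ?_) <;>
    fin_cases i <;> fin_cases j <;>
    simp [uMB, Matrix.add_apply] <;> ring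

lemma uB_smul (t r : F) (a : Cayley F) : uB t (r • a) = r • uB t a := by
  refine Prod.ext (Matrix.ext fun i j => ?_) (Matrix.ext fun i j => ?_) <;>
    fin_cases i <;> fin_cases j <;>
    simp [uB, Matrix.smul_apply] <;> ring

lemma uMB_smul (t r : F) (a : Cayley F) : uMB t (r • a) = r • uMB t a := by
  refine Prod.ext (Matrix.ext fun i j => ?_) (Matrix.ext fun i j => ?_) <;>
    fin_cases i <;> fin_cases j <;>
    simp [uMB, Matrix.smul_apply] <;> ring

lemma uB_cmul (t : F) (a b : Cayley F) : uB t (cmul a b) = cmul (uB t a) (uB t b) := by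
  obtain ⟨x, y⟩ := a
  obtain ⟨z, w⟩ := b
  rw [Matrix.eta_fin_two x, Matrix.eta_fin_two y, Matrix.eta_fin_two z, Matrix.eta_fin_two w]
  simp only [cmul, uB, Matrix.adjugate_fin_two_of, Matrix.adjugate_fin_two,
    Matrix.mul_fin_two, Matrix.cons_val', Matrix.cons_val_zero, Matrix.cons_val_one,
    Matrix.head_cons, Matrix.head_fin_const, Matrix.empty_val', Matrix.cons_val_fin_one,
    Matrix.add_apply, Prod.mk.injEq, Matrix.of_apply]
  constructor <;> (ext i j; fin_cases i <;> fin_cases j <;>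
    simp [Matrix.add_apply] <;> ring)

lemma uMB_cmul (t : F) (a b : Cayley F) : uMB t (cmul a b) = cmul (uMB t a) (uMB t b) := by
  obtain ⟨x, y⟩ := a
  obtain ⟨z, w⟩ := b
  rw [Matrix.eta_fin_two x, Matrix.eta_fin_two y, Matrix.eta_fin_two z, Matrix.eta_fin_two w]
  simp only [cmul, uMB, Matrix.adjugate_fin_two_of, Matrix.adjugate_fin_two,
    Matrix.mul_fin_two, Matrix.cons_val', Matrix.cons_val_zero, Matrix.cons_val_one,
    Matrix.head_cons, Matrix.head_fin_const, Matrix.empty_val', Matrix.cons_val_fin_one,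
    Matrix.add_apply, Prod.mk.injEq, Matrix.of_apply]
  constructor <;> (ext i j; fin_cases i <;> fin_cases j <;>
    simp [Matrix.add_apply] <;> ring)

lemma uB_comp (s t : F) (c : Cayley F) : uB s (uB t c) = uB (s + t) c := by
  refine Prod.ext (Matrix.ext fun i j => ?_) (Matrix.ext fun i j => ?_) <;>
    fin_cases i <;> fin_cases j <;> simp [uB] <;> ring

lemma uMB_comp (s t : F) (c : Cayley F) : uMB s (uMB t c) = uMB (s + t) c := by
  refine Prod.ext (Matrix.ext fun i j => ?_) (Matrix.ext fun i j => ?_) <;>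
    fin_cases i <;> fin_cases j <;> simp [uMB] <;> ring

lemma uB_zero (c : Cayley F) : uB (0 : F) c = c := by
  obtain ⟨x, y⟩ := c
  refine Prod.ext ?_ ?_ <;>
    · ext i j; fin_cases i <;> fin_cases j <;> simp [uB]

lemma uMB_zero (c : Cayley F) : uMB (0 : F) c = c := by
  obtain ⟨x, y⟩ := c
  refine Prod.ext ?_ ?_ <;>
    · ext i j; fin_cases i <;> fin_cases j <;> simp [uMB]

lemma uB_bij (t : F) : Function.Bijective (uB (F := F) t) := by
  refine Function.bijective_iff_has_inverse.2 ⟨uB (-t), fun c => ?_, fun c => ?_⟩ <;>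
    rw [uB_comp] <;> simp [uB_zero]

lemma uMB_bij (t : F) : Function.Bijective (uMB (F := F) t) := by
  refine Function.bijective_iff_has_inverse.2 ⟨uMB (-t), fun c => ?_, fun c => ?_⟩ <;>
    rw [uMB_comp] <;> simp [uMB_zero]

/-- The long-root maps `u_β(t)` and `u_{−β}(t)`: they are given by
`c ↦ c + t·L_{w₀,x₀}(c)` (resp. `c ↦ c + t·L_{w₀',x₀'}(c)`), they are algebra
automorphisms of the split Cayley algebra, and they are one-parameter groups. -/
theorem uB_one_parameter_automorphisms :
    (∀ (t : F) (c : Cayley F),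
      uB t c = c + t • Lab ((0, single 0 0 (1 : F)) : Cayley F)
        ((single 1 0 (1 : F), 0) : Cayley F) c) ∧
    (∀ (t : F) (c : Cayley F),
      uMB t c = c + t • Lab ((0, single 1 1 (1 : F)) : Cayley F)
        ((-(single 0 1 (1 : F)), 0) : Cayley F) c) ∧
    (∀ t : F,
      Function.Bijective (uB (F := F) t) ∧
      (∀ a b : Cayley F, uB t (a + b) = uB t a + uB t b) ∧
      (∀ (r : F) (a : Cayley F), uB t (r • a) = r • uB t a) ∧
      (∀ a b : Cayley F, uB t (cmul a b) = cmul (uB t a) (uB t b))) ∧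
    (∀ t : F,
      Function.Bijective (uMB (F := F) t) ∧
      (∀ a b : Cayley F, uMB t (a + b) = uMB t a + uMB t b) ∧
      (∀ (r : F) (a : Cayley F), uMB t (r • a) = r • uMB t a) ∧
      (∀ a b : Cayley F, uMB t (cmul a b) = cmul (uMB t a) (uMB t b))) ∧
    (∀ s t : F, uB (F := F) s ∘ uB t = uB (s + t)) ∧
    (∀ s t : F, uMB (F := F) s ∘ uMB t = uMB (s + t)) := by
  refine ⟨uB_Lab, uMB_Lab,
    fun t => ⟨uB_bij t, uB_add t, uB_smul t, uB_cmul t⟩,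
    fun t => ⟨uMB_bij t, uMB_add t, uMB_smul t, uMB_cmul t⟩,
    fun s t => funext (uB_comp s t), fun s t => funext (uMB_comp s t)⟩
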